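/- Let s ≥ 1 and let a, b : Fin s → ℕ. There exists a nonzero vector μ ∈ ℝ^s such that sign(μ_i) = sign((b_i : ℝ) − (a_i : ℝ)) for all i, ∑_i a_i μ_i > 0, and ∑_i a_i μ_i > μ_j for every j, if and only if ∑_{i : a_i < b_i} a_i > 1. -/

import Mathlib

private lemma sign_one_pos {x : ℝ} (h : Real.sign x = 1) : 0 < x := by
  rcases lt_trichotomy x 0 with h1 | h1 | h1
  · rw [Real.sign_of_neg h1] at h; norm_num at h
  · rw [h1, Real.sign_zero] at h; norm_num at h
  · exact h1

private lemma sign_neg_one_neg {x : ℝ} (h : Real.sign x = -1) : x < 0 := by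
  rcases lt_trichotomy x 0 with h1 | h1 | h1
  · exact h1
  · rw [h1, Real.sign_zero] at h; norm_num at h
  · rw [Real.sign_of_pos h1] at h; norm_num at h

/-- The inequality system of the Deficiency One Algorithm for the irreversible one-reaction
fully open network: there is a nonzero `μ ∈ ℝ^s` with `sign(μ_i) = sign(b_i − a_i)` for all
`i`, `∑ a_i μ_i > 0` and `∑ a_i μ_i > μ_j` for all `j`, if and only if
`∑_{i : a_i < b_i} a_i > 1`. -/
theorem ineq_system_solvable_iff (s : ℕ) (hs : 1 ≤ s) (a b : Fin s → ℕ) :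
    (∃ μ : Fin s → ℝ, μ ≠ 0 ∧
      (∀ i, Real.sign (μ i) = Real.sign ((b i : ℝ) - (a i : ℝ))) ∧
      0 < ∑ i, (a i : ℝ) * μ i ∧
      (∀ j, μ j < ∑ i, (a i : ℝ) * μ i)) ↔
    1 < ∑ i ∈ Finset.univ.filter (fun i => a i < b i), a i := by
  set FS := Finset.univ.filter (fun i => a i < b i) with hFS
  constructor
  · rintro ⟨μ, hμ0, hsign, hpos, hmax⟩
    by_contra hN
    push_neg at hN
    -- μ i ≤ 0 outside FS
    have hout : ∀ i, ¬ a i < b i → μ i ≤ 0 := by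
      intro i hi
      rcases lt_or_eq_of_le (not_lt.mp hi) with h1 | h1
      · have : (b i : ℝ) - a i < 0 := by
          have : (b i : ℝ) < a i := by exact_mod_cast h1
          linarith
        exact le_of_lt (sign_neg_one_neg (by rw [hsign i, Real.sign_of_neg this]))
      · have hz : (b i : ℝ) - a i = 0 := by
          have : (b i : ℝ) = a i := by exact_mod_cast h1
          linarith
        have hsz : Real.sign (μ i) = 0 := by rw [hsign i, hz, Real.sign_zero]
        exact le_of_eq (Real.sign_eq_zero_iff.mp hsz)
    have hsplit := (Finset.sum_filter_add_sum_filter_not Finset.univ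
      (fun i => a i < b i) (fun i => (a i : ℝ) * μ i)).symm
    have hrest : ∑ i ∈ Finset.univ.filter (fun i => ¬ a i < b i), (a i : ℝ) * μ i ≤ 0 := by
      apply Finset.sum_nonpos
      intro i hi
      simp only [Finset.mem_filter] at hi
      exact mul_nonpos_of_nonneg_of_nonpos (Nat.cast_nonneg _) (hout i hi.2)
    have hle : ∑ i, (a i : ℝ) * μ i ≤ ∑ i ∈ FS, (a i : ℝ) * μ i := by
      rw [hsplit]; linarith
    rcases Finset.eq_empty_or_nonempty FS with he | hne
    · rw [he] at hle; simp at hle; linarith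
    · obtain ⟨i0, hi0, hmaxi⟩ := Finset.exists_max_image FS μ hne
      have hμi0 : 0 < μ i0 := by
        have : a i0 < b i0 := (Finset.mem_filter.mp hi0).2
        have hb : (0:ℝ) < (b i0 : ℝ) - a i0 := by
          have : (a i0 : ℝ) < b i0 := by exact_mod_cast this
          linarith
        exact sign_one_pos (by rw [hsign i0, Real.sign_of_pos hb])
      have h1 : ∑ i ∈ FS, (a i : ℝ) * μ i ≤ ∑ i ∈ FS, (a i : ℝ) * μ i0 :=
        Finset.sum_le_sum (fun i hi =>
          mul_le_mul_of_nonneg_left (hmaxi i hi) (Nat.cast_nonneg _))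
      have h2 : ∑ i ∈ FS, (a i : ℝ) * μ i0 = ((∑ i ∈ FS, a i : ℕ) : ℝ) * μ i0 := by
        push_cast
        rw [Finset.sum_mul]
      have h3 : ((∑ i ∈ FS, a i : ℕ) : ℝ) ≤ 1 := by exact_mod_cast hN
      have h4 : ((∑ i ∈ FS, a i : ℕ) : ℝ) * μ i0 ≤ 1 * μ i0 :=
        mul_le_mul_of_nonneg_right h3 hμi0.le
      have := hmax i0
      rw [h2] at h1
      linarith
  · intro hN
    set FT := Finset.univ.filter (fun i => b i < a i) with hFT
    set N := ∑ i ∈ FS, a i with hNdef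
    set M := ∑ i ∈ FT, a i with hMdef
    set ε : ℝ := ((N:ℝ) - 1)/(2*((M:ℝ)+1)) with hεdef
    have hN1 : (1:ℝ) < N := by exact_mod_cast hN
    have hM0 : (0:ℝ) ≤ M := Nat.cast_nonneg _
    have hε : 0 < ε := div_pos (by linarith) (by linarith)
    set μ : Fin s → ℝ := fun i => if a i < b i then 1 else if b i < a i then -ε else 0 with hμdef
    have key : ∑ i, (a i : ℝ) * μ i = (N:ℝ) - ε * M := by
      have h1 : ∀ i, (a i : ℝ) * μ i =
          (if a i < b i then (a i : ℝ) else 0) + (-ε) * (if b i < a i then (a i : ℝ) else 0) := by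
        intro i
        rcases lt_trichotomy (a i) (b i) with h | h | h
        · simp [hμdef, h, h.asymm]
        · simp [hμdef, h, lt_irrefl]
        · simp [hμdef, h, h.asymm, not_lt_of_gt h]
          ring
      rw [Finset.sum_congr rfl (fun i _ => h1 i), Finset.sum_add_distrib,
        ← Finset.mul_sum, ← Finset.sum_filter, ← Finset.sum_filter]
      have : ∑ i ∈ FS, (a i : ℝ) = (N:ℝ) := by rw [hNdef]; push_cast; rfl
      have h2 : ∑ i ∈ FT, (a i : ℝ) = (M:ℝ) := by rw [hMdef]; push_cast; rfl
      rw [hFS] at this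
      rw [hFT] at h2
      rw [this, h2]
      ring
    have hεM : ε * M < (N:ℝ) - 1 := by
      have h2 : ε * (2*((M:ℝ)+1)) = (N:ℝ) - 1 := by
        rw [hεdef]; field_simp
      nlinarith
    have hsum1 : (1:ℝ) < ∑ i, (a i : ℝ) * μ i := by rw [key]; linarith
    refine ⟨μ, ?_, ?_, by linarith, ?_⟩
    · -- nonzero
      have : ∃ i ∈ FS, a i ≠ 0 := by
        by_contra h
        push_neg at h
        have : N = 0 := Finset.sum_eq_zero h
        omega
      obtain ⟨i0, hi0, -⟩ := this
      have hi0' : a i0 < b i0 := (Finset.mem_filter.mp hi0).2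
      intro hcontra
      have : μ i0 = 0 := by rw [hcontra]; rfl
      rw [hμdef] at this
      simp [hi0'] at this
    · intro i
      rcases lt_trichotomy (a i) (b i) with h | h | h
      · have hb : (0:ℝ) < (b i : ℝ) - a i := by
          have : (a i : ℝ) < b i := by exact_mod_cast h
          linarith
        simp only [hμdef, if_pos h]
        rw [Real.sign_one, Real.sign_of_pos hb]
      · simp only [hμdef, if_neg (by omega : ¬ a i < b i), if_neg (by omega : ¬ b i < a i)]
        have : (b i : ℝ) - a i = 0 := by
          rw [h]; ring
        rw [this, Real.sign_zero]
      · have hb : (b i : ℝ) - a i < 0 := by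
          have : (b i : ℝ) < a i := by exact_mod_cast h
          linarith
        simp only [hμdef, if_neg (by omega : ¬ a i < b i), if_pos h]
        rw [Real.sign_of_neg (by linarith : -ε < 0), Real.sign_of_neg hb]
    · intro j
      have : μ j ≤ 1 := by
        rw [hμdef]
        dsimp only
        split_ifs <;> linarith
      linarith
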